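/- Let m ≥ 1, n ≥ 2 be integers, let V(P_n) = {v₁, …, vₙ} with vᵢ adjacent to vᵢ₊₁, and let D be a minimum dominating set of K_m ⊠ P_n. (a) If n ≡ 0 (mod 3), then D ∩ (V(K_m) × {vᵢ}) = ∅ for every i with 1 ≤ i ≤ n and i ≡ 0 or 1 (mod 3). (b) If n ≡ 2 (mod 3), then D ∩ (V(K_m) × {vᵢ}) = ∅ for every i with 1 ≤ i ≤ n and i ≡ 0 (mod 3). -/

import Mathlib

open SimpleGraph Finset

/-- `D` is a dominating set of `G`: every vertex is in `D` or adjacent to a vertex of `D`. -/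
def SimpleGraph.IsDominatingSet {V : Type*} (G : SimpleGraph V) (D : Set V) : Prop :=
  ∀ v : V, v ∈ D ∨ ∃ u ∈ D, G.Adj u v

/-- The domination number of a finite graph. -/
noncomputable def SimpleGraph.dominationNumber {V : Type*} [Fintype V]
    (G : SimpleGraph V) : ℕ :=
  sInf {k | ∃ D : Finset V, D.card = k ∧ G.IsDominatingSet ↑D}

/-- The bondage number of a finite graph: the least size of a set of edges whose removal
increases the domination number. -/
noncomputable def SimpleGraph.bondageNumber {V : Type*} [Fintype V]
    (G : SimpleGraph V) : ℕ :=
  sInf {k | ∃ Z : Finset (Sym2 V), Z.card = k ∧ (↑Z : Set (Sym2 V)) ⊆ G.edgeSet ∧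
    G.dominationNumber < (G.deleteEdges ↑Z).dominationNumber}

/-- The strong product of two simple graphs. -/
def SimpleGraph.strongProd {V W : Type*} (G : SimpleGraph V) (H : SimpleGraph W) :
    SimpleGraph (V × W) :=
  SimpleGraph.fromRel (fun a b =>
    (a.1 = b.1 ∧ H.Adj a.2 b.2) ∨ (G.Adj a.1 b.1 ∧ a.2 = b.2) ∨
      (G.Adj a.1 b.1 ∧ H.Adj a.2 b.2))

infixl:70 " ⊠ " => SimpleGraph.strongProd

lemma path_struct (n : ℕ) (hn : 1 ≤ n) (S : Finset ℕ) (hsub : ∀ s ∈ S, s < n)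
    (hdomS : ∀ j < n, ∃ s ∈ S, s = j ∨ s + 1 = j ∨ j + 1 = s) :
    (n + 2) / 3 ≤ S.card ∧
    ∀ s ∈ S, ∃ i < S.card, s ≤ 1 + 3 * i ∧ n ≤ s + 3 * (S.card - 1 - i) + 2 := by
  set k := S.card with hk
  have hk0 : 0 < k := by
    obtain ⟨s, hs, -⟩ := hdomS 0 hn
    exact Finset.card_pos.mpr ⟨s, hs⟩
  set f := S.orderIsoOfFin hk.symm with hf
  set g : Fin k → ℕ := fun i => (f i : ℕ) with hg
  have hgS : ∀ i, g i ∈ S := fun i => (f i).2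
  have hmono : ∀ {i j : Fin k}, i < j → g i < g j := by
    intro i j h
    exact f.strictMono h
  have hmono' : ∀ {i j : Fin k}, i ≤ j → g i ≤ g j := by
    intro i j h
    rcases eq_or_lt_of_le h with rfl | h
    · exact le_rfl
    · exact le_of_lt (hmono h)
  have hsurj : ∀ s ∈ S, ∃ i : Fin k, g i = s := by
    intro s hs
    exact ⟨f.symm ⟨s, hs⟩, by simp [hg]⟩
  have h0 : g ⟨0, hk0⟩ ≤ 1 := by
    obtain ⟨s, hs, hc⟩ := hdomS 0 hn
    obtain ⟨i, rfl⟩ := hsurj s hs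
    have := hmono' (show (⟨0, hk0⟩ : Fin k) ≤ i from Fin.mk_le_mk.mpr (Nat.zero_le _))
    omega
  have hstep : ∀ a b (ha : a < k) (hb : b < k), b = a + 1 →
      g ⟨b, hb⟩ ≤ g ⟨a, ha⟩ + 3 := by
    intro a b ha hb hab
    subst hab
    by_contra hlt
    push_neg at hlt
    have hj2 : g ⟨a, ha⟩ + 2 < n := by
      have := hsub _ (hgS ⟨a + 1, hb⟩)
      omega
    obtain ⟨s, hs, hc⟩ := hdomS (g ⟨a, ha⟩ + 2) hj2
    obtain ⟨i, rfl⟩ := hsurj s hs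
    have h1 : g ⟨a, ha⟩ < g i := by omega
    have h2 : (⟨a, ha⟩ : Fin k) < i := by
      by_contra hcon
      push_neg at hcon
      exact absurd (hmono' hcon) (by omega)
    have h3 : g ⟨a + 1, hb⟩ ≤ g i := by
      have : a + 1 ≤ i.val := h2
      exact hmono' (show (⟨a + 1, hb⟩ : Fin k) ≤ i from this)
    omega
  have hup : ∀ a (ha : a < k), g ⟨a, ha⟩ ≤ 1 + 3 * a := by
    intro a
    induction a with
    | zero => intro ha; exact h0
    | succ a ih =>
      intro ha
      have h1 := hstep a (a + 1) (by omega) ha rfl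
      have h2 := ih (by omega)
      omega
  have hlast : n ≤ g ⟨k - 1, by omega⟩ + 2 := by
    obtain ⟨s, hs, hc⟩ := hdomS (n - 1) (by omega)
    obtain ⟨i, rfl⟩ := hsurj s hs
    have hsn := hsub _ (hgS i)
    have : g i ≤ g ⟨k - 1, by omega⟩ := hmono' (show i ≤ ⟨k - 1, by omega⟩ from by
      have := i.2; exact Nat.le_sub_one_of_lt this)
    omega
  have hdown : ∀ d a (ha : a < k), k - 1 - a = d → g ⟨k - 1, by omega⟩ ≤ g ⟨a, ha⟩ + 3 * d := by
    intro d
    induction d with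
    | zero =>
      intro a ha h0'
      have : a = k - 1 := by omega
      subst this
      exact Nat.le_add_right _ _
    | succ d ih =>
      intro a ha h0'
      have ha1 : a + 1 < k := by omega
      have h1 := hstep a (a + 1) ha ha1 rfl
      have h2 := ih (a + 1) ha1 (by omega)
      omega
  constructor
  · have h1 := hup (k - 1) (by omega)
    omega
  · intro s hs
    obtain ⟨i, rfl⟩ := hsurj s hs
    refine ⟨i.val, i.2, ?_, ?_⟩
    · exact hup i.val i.2
    · have h1 := hdown (k - 1 - i.val) i.val i.2 rfl
      have heq : g ⟨i.val, i.2⟩ = g i := rfl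
      omega

/-- **Lemma.** Let `D` be a minimum dominating set of `K_m ⊠ P_n`, where the vertices of
`P_n` are `v₁, …, vₙ` (here `vᵢ` is the element of `Fin n` with value `i - 1`).
(a) If `n ≡ 0 (mod 3)`, then `D ∩ (V(K_m) × {vᵢ}) = ∅` for every `1 ≤ i ≤ n` with
`i ≡ 0, 1 (mod 3)`.
(b) If `n ≡ 2 (mod 3)`, then `D ∩ (V(K_m) × {vᵢ}) = ∅` for every `1 ≤ i ≤ n` with
`i ≡ 0 (mod 3)`. -/
theorem min_dominating_empty_fibers (m n : ℕ) (hm : 1 ≤ m) (hn : 2 ≤ n)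
    (D : Finset (Fin m × Fin n))
    (hdom : ((⊤ : SimpleGraph (Fin m)) ⊠ pathGraph n).IsDominatingSet ↑D)
    (hmin : D.card = ((⊤ : SimpleGraph (Fin m)) ⊠ pathGraph n).dominationNumber) :
    (n % 3 = 0 → ∀ i : ℕ, 1 ≤ i → i ≤ n → (i % 3 = 0 ∨ i % 3 = 1) →
      D.filter (fun p => (p.2 : ℕ) = i - 1) = ∅) ∧
    (n % 3 = 2 → ∀ i : ℕ, 1 ≤ i → i ≤ n → i % 3 = 0 →
      D.filter (fun p => (p.2 : ℕ) = i - 1) = ∅) := by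
  set a0 : Fin m := ⟨0, hm⟩ with ha0
  set S : Finset ℕ := D.image (fun p => (p.2 : ℕ)) with hS
  have hsubS : ∀ s ∈ S, s < n := by
    intro s hs
    obtain ⟨p, -, rfl⟩ := Finset.mem_image.mp hs
    exact p.2.isLt
  have hdomS : ∀ j < n, ∃ s ∈ S, s = j ∨ s + 1 = j ∨ j + 1 = s := by
    intro j hj
    rcases hdom (a0, ⟨j, hj⟩) with hv | ⟨u, hu, hadj⟩
    · exact ⟨j, Finset.mem_image.mpr ⟨(a0, ⟨j, hj⟩), hv, rfl⟩, Or.inl rfl⟩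
    · refine ⟨(u.2 : ℕ), Finset.mem_image.mpr ⟨u, hu, rfl⟩, ?_⟩
      simp only [SimpleGraph.strongProd, SimpleGraph.fromRel_adj] at hadj
      obtain ⟨-, hr⟩ := hadj
      have : u.2 = (⟨j, hj⟩ : Fin n) ∨ (pathGraph n).Adj u.2 ⟨j, hj⟩ ∨
          (pathGraph n).Adj (⟨j, hj⟩ : Fin n) u.2 := by tauto
      rcases this with h | h | h
      · left; rw [h]
      · rw [pathGraph_adj] at h; simp only [] at h; omega
      · rw [pathGraph_adj] at h; simp only [] at h; omega
  -- key structural fact, valid when n % 3 ≠ 1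
  have key : n % 3 ≠ 1 → ∀ s ∈ S, ∃ i < (n + 2) / 3,
      s ≤ 1 + 3 * i ∧ n ≤ s + 3 * ((n + 2) / 3 - 1 - i) + 2 := by
    intro hn3
    -- upper bound : there is a dominating set of size (n+2)/3
    set k3 : ℕ := (n + 2) / 3 with hk3
    set E : Finset (Fin m × Fin n) :=
      (Finset.range k3).image
        (fun i => (a0, (⟨min (3 * i + 1) (n - 1), by omega⟩ : Fin n))) with hE
    have hEcard : E.card = k3 := by
      rw [hE, Finset.card_image_of_injOn, Finset.card_range]
      intro i hi j hj hij
      simp only [Finset.mem_coe, Finset.mem_range] at hi hj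
      have := congrArg (fun p => ((p.2 : Fin n) : ℕ)) hij
      simp only [] at this
      omega
    have hEdom : ((⊤ : SimpleGraph (Fin m)) ⊠ pathGraph n).IsDominatingSet ↑E := by
      intro v
      set j : ℕ := (v.2 : ℕ) with hj
      have hjn : j < n := v.2.isLt
      set i : ℕ := j / 3 with hi
      have hik : i < k3 := by omega
      set p : ℕ := min (3 * i + 1) (n - 1) with hp
      have hpj : p = 3 * i + 1 := by omega
      have hclose : p = j ∨ p + 1 = j ∨ j + 1 = p := by omega
      set u : Fin m × Fin n := (a0, (⟨p, by omega⟩ : Fin n)) with hu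
      have huE : u ∈ (↑E : Set (Fin m × Fin n)) := by
        rw [hE]
        simp only [Finset.coe_image, Set.mem_image, Finset.mem_coe, Finset.mem_range]
        exact ⟨i, hik, rfl⟩
      by_cases huv : u = v
      · left; rw [← huv]; exact huE
      · right
        refine ⟨u, huE, ?_⟩
        simp only [SimpleGraph.strongProd, SimpleGraph.fromRel_adj]
        refine ⟨huv, Or.inl ?_⟩
        by_cases hb : v.1 = a0
        · by_cases hw : (v.2 : ℕ) = p
          · exact absurd (Prod.ext hb.symm (Fin.ext hw.symm)) huv
          · left
            refine ⟨hb.symm, ?_⟩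
            rw [pathGraph_adj]
            simp only [hu]
            omega
        · by_cases hw : (v.2 : ℕ) = p
          · right; left
            exact ⟨by exact fun h => hb h.symm, Fin.ext hw.symm⟩
          · right; right
            refine ⟨by exact fun h => hb h.symm, ?_⟩
            rw [pathGraph_adj]
            simp only [hu]
            omega
    have hγ : ((⊤ : SimpleGraph (Fin m)) ⊠ pathGraph n).dominationNumber ≤ k3 := by
      apply Nat.sInf_le
      exact ⟨E, hEcard, hEdom⟩
    obtain ⟨hlow, hstruct⟩ := path_struct n (by omega) S hsubS hdomS
    have hScard : S.card = k3 := by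
      have h1 : S.card ≤ D.card := Finset.card_image_le
      omega
    intro s hs
    obtain ⟨i, hi, h1, h2⟩ := hstruct s hs
    exact ⟨i, by omega, h1, by rw [← hScard]; exact h2⟩
  constructor
  · intro hn3 i hi1 hin hi3
    rw [Finset.eq_empty_iff_forall_notMem]
    intro p hp
    rw [Finset.mem_filter] at hp
    have hsS : (i - 1) ∈ S := Finset.mem_image.mpr ⟨p, hp.1, hp.2⟩
    obtain ⟨l, hl, h1, h2⟩ := key (by omega) (i - 1) hsS
    omega
  · intro hn3 i hi1 hin hi3
    rw [Finset.eq_empty_iff_forall_notMem]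
    intro p hp
    rw [Finset.mem_filter] at hp
    have hsS : (i - 1) ∈ S := Finset.mem_image.mpr ⟨p, hp.1, hp.2⟩
    obtain ⟨l, hl, h1, h2⟩ := key (by omega) (i - 1) hsS
    omega
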